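/- For a prime p and r ≥ 2, the series G_r^p(x) = exp(-∑_{n ≥ 1} (pn)_p^{r-1} x^n/n) satisfies the functional equation G_r^p(x) = (Q_p(x) · G_r^p(x^p))^{p^{r-2}}, where Q_p(x) = (1-x)^p/(1-x^p). -/

import Mathlib

open PowerSeries

/-- The formal exponential `exp f = ∑ₖ f^k / k!` of a power series `f` (with zero constant term). -/
noncomputable def expPS (f : PowerSeries ℚ) : PowerSeries ℚ :=
  PowerSeries.mk fun n =>
    ∑ k ∈ Finset.range (n + 1), (PowerSeries.coeff n (f ^ k)) / (Nat.factorial k)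

/-- The series `∑_{n ≥ 1} a n * x^n / n`. -/
noncomputable def serA (a : ℕ → ℚ) : PowerSeries ℚ :=
  PowerSeries.mk fun n => if n = 0 then 0 else a n / n

/-- The substitution `x ↦ x^p` in a formal power series. -/
noncomputable def powSubst (f : PowerSeries ℚ) (p : ℕ) : PowerSeries ℚ :=
  PowerSeries.mk fun n => if p ∣ n then PowerSeries.coeff (n / p) f else 0

/-- The series `G_r^p(x) = exp (-∑_{n ≥ 1} (p n)_p^(r-1) x^n / n)`,
where `(p n)_p = p^(1 + ν_p n)`. -/
noncomputable def Gser (p r : ℕ) : PowerSeries ℚ :=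
  expPS (serA fun n => -((p : ℚ) ^ ((1 + padicValNat p n) * (r - 1))))

/-- Partial sums of the exponential series. -/
noncomputable def partialExp (f : PowerSeries ℚ) (N : ℕ) : PowerSeries ℚ :=
  ∑ k ∈ Finset.range N, (Nat.factorial k : ℚ)⁻¹ • f ^ k

lemma coeff_pow_zero {f : PowerSeries ℚ} (hf : constantCoeff f = 0) :
    ∀ (k n : ℕ), n < k → coeff n (f ^ k) = 0 := by
  intro k
  induction k with
  | zero => intro n h; omega
  | succ k ih =>
    intro n h
    rw [pow_succ, mul_comm, coeff_mul]
    apply Finset.sum_eq_zero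
    rintro ⟨i, j⟩ hij
    rw [Finset.HasAntidiagonal.mem_antidiagonal] at hij
    rcases Nat.eq_zero_or_pos i with hi | hi
    · subst hi
      simp [coeff_zero_eq_constantCoeff, hf]
    · have : j < k := by omega
      rw [ih j this, mul_zero]

lemma coeff_expPS_eq {f : PowerSeries ℚ} (hf : constantCoeff f = 0) {n N : ℕ} (h : n < N) :
    coeff n (expPS f) = coeff n (partialExp f N) := by
  rw [expPS, coeff_mk, partialExp, map_sum]
  have : ∀ k ∈ Finset.range N, coeff n ((Nat.factorial k : ℚ)⁻¹ • f ^ k)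
      = coeff n (f ^ k) / (Nat.factorial k) := by
    intro k _
    rw [map_smul, smul_eq_mul, div_eq_inv_mul]
  rw [Finset.sum_congr rfl this]
  apply Finset.sum_subset
  · intro k hk
    rw [Finset.mem_range] at *
    omega
  · intro k _ hk
    rw [Finset.mem_range, not_lt] at hk
    rw [coeff_pow_zero hf k n (by omega), zero_div]

lemma deriv_partialExp (f : PowerSeries ℚ) (N : ℕ) :
    d⁄dX ℚ (partialExp f (N + 1)) = d⁄dX ℚ f * partialExp f N := by
  rw [partialExp, map_sum, Finset.sum_range_succ']
  have h0 : d⁄dX ℚ ((Nat.factorial 0 : ℚ)⁻¹ • f ^ 0) = 0 := by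
    simp
  rw [h0, add_zero, partialExp, Finset.mul_sum]
  apply Finset.sum_congr rfl
  intro k _
  rw [Derivation.map_smul, Derivation.leibniz_pow]
  rw [← Nat.cast_smul_eq_nsmul ℚ (k + 1), smul_smul]
  have hfac : (Nat.factorial (k + 1) : ℚ)⁻¹ * ((k + 1 : ℕ) : ℚ) = (Nat.factorial k : ℚ)⁻¹ := by
    rw [Nat.factorial_succ]
    push_cast
    have h1 : ((k : ℚ) + 1) ≠ 0 := by positivity
    have h2 : (Nat.factorial k : ℚ) ≠ 0 := by
      exact_mod_cast Nat.factorial_ne_zero k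
    field_simp
  rw [hfac]
  have hk : k + 1 - 1 = k := rfl
  rw [hk, smul_eq_mul, mul_smul_comm, mul_comm]

lemma deriv_expPS {f : PowerSeries ℚ} (hf : constantCoeff f = 0) :
    d⁄dX ℚ (expPS f) = d⁄dX ℚ f * expPS f := by
  ext n
  rw [coeff_derivative, coeff_expPS_eq hf (show n + 1 < n + 2 by omega), ← coeff_derivative,
    deriv_partialExp, coeff_mul, coeff_mul]
  apply Finset.sum_congr rfl
  rintro ⟨i, j⟩ hij
  rw [Finset.HasAntidiagonal.mem_antidiagonal] at hij
  rw [coeff_expPS_eq hf (show j < n + 1 by omega)]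

def LD (F g : PowerSeries ℚ) : Prop := d⁄dX ℚ F = g * F

lemma LD_mul {F K g h : PowerSeries ℚ} (hF : LD F g) (hK : LD K h) : LD (F * K) (g + h) := by
  unfold LD at *
  rw [Derivation.leibniz, hF, hK, smul_eq_mul, smul_eq_mul]
  ring

lemma LD_pow {F g : PowerSeries ℚ} (hF : LD F g) (n : ℕ) :
    LD (F ^ n) ((n : PowerSeries ℚ) * g) := by
  induction n with
  | zero => unfold LD; simp
  | succ n ih =>
    have := LD_mul ih hF
    rw [← pow_succ] at this
    convert this using 1
    push_cast
    ring

lemma LD_inv {F g : PowerSeries ℚ} (hF : LD F g) (h0 : constantCoeff F ≠ 0) :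
    LD F⁻¹ (-g) := by
  unfold LD at *
  rw [derivative_inv', hF]
  have h1 : F⁻¹ * F = 1 := PowerSeries.inv_mul_cancel F h0
  calc -F⁻¹ ^ 2 * (g * F) = -g * (F⁻¹ * (F⁻¹ * F)) := by ring
    _ = -g * F⁻¹ := by rw [h1, mul_one]

lemma LD_unique {F H g : PowerSeries ℚ} (hF : LD F g) (hH : LD H g)
    (h0 : constantCoeff F = constantCoeff H) (hu : constantCoeff H ≠ 0) : F = H := by
  have hHi := LD_inv hH hu
  have hK : d⁄dX ℚ (F * H⁻¹) = 0 := by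
    rw [Derivation.leibniz, hF, hHi, smul_eq_mul, smul_eq_mul]
    ring
  have hc : constantCoeff (F * H⁻¹) = 1 := by
    rw [map_mul, constantCoeff_inv, h0, mul_inv_cancel₀ hu]
  have hone : F * H⁻¹ = 1 := by
    apply derivative.ext (g := 1)
    · rw [hK]; simp
    · rw [hc]; simp
  calc F = F * (H⁻¹ * H) := by rw [PowerSeries.inv_mul_cancel H hu, mul_one]
    _ = (F * H⁻¹) * H := by ring
    _ = H := by rw [hone, one_mul]

lemma coeff_powSubst (f : PowerSeries ℚ) (p n : ℕ) :
    coeff n (powSubst f p) = if p ∣ n then coeff (n / p) f else 0 := by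
  rw [powSubst, coeff_mk]

lemma powSubst_mul {p : ℕ} (hp : 0 < p) (F G : PowerSeries ℚ) :
    powSubst (F * G) p = powSubst F p * powSubst G p := by
  ext n
  rw [coeff_powSubst, coeff_mul n (powSubst F p) (powSubst G p)]
  by_cases hd : p ∣ n
  · obtain ⟨m, rfl⟩ := hd
    rw [if_pos ⟨m, rfl⟩, Nat.mul_div_cancel_left m hp, coeff_mul]
    have hinj : Function.Injective (fun ab : ℕ × ℕ => (p * ab.1, p * ab.2)) := by
      rintro ⟨a, b⟩ ⟨c, d⟩ h
      simp only [Prod.mk.injEq] at h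
      have h1 : a = c := Nat.eq_of_mul_eq_mul_left hp h.1
      have h2 : b = d := Nat.eq_of_mul_eq_mul_left hp h.2
      simp [h1, h2]
    let e : ℕ × ℕ ↪ ℕ × ℕ := ⟨fun ab => (p * ab.1, p * ab.2), hinj⟩
    have hsub : (Finset.HasAntidiagonal.antidiagonal m).map e ⊆ Finset.HasAntidiagonal.antidiagonal (p * m) := by
      intro ij hij
      rw [Finset.mem_map] at hij
      obtain ⟨⟨a, b⟩, hab, rfl⟩ := hij
      rw [Finset.HasAntidiagonal.mem_antidiagonal] at hab ⊢
      simp only [e, Function.Embedding.coeFn_mk]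
      rw [← Nat.mul_add, hab]
    rw [← Finset.sum_subset hsub]
    · rw [Finset.sum_map]
      apply Finset.sum_congr rfl
      rintro ⟨a, b⟩ _
      simp only [e, Function.Embedding.coeFn_mk, coeff_powSubst]
      rw [if_pos ⟨a, rfl⟩, if_pos ⟨b, rfl⟩, Nat.mul_div_cancel_left a hp,
        Nat.mul_div_cancel_left b hp]
    · rintro ⟨i, j⟩ hij hnot
      rw [Finset.HasAntidiagonal.mem_antidiagonal] at hij
      rw [coeff_powSubst, coeff_powSubst]
      by_cases hi : p ∣ i
      · by_cases hj : p ∣ j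
        · exfalso
          apply hnot
          rw [Finset.mem_map]
          obtain ⟨a, rfl⟩ := hi
          obtain ⟨b, rfl⟩ := hj
          refine ⟨(a, b), ?_, rfl⟩
          rw [Finset.HasAntidiagonal.mem_antidiagonal]
          have : p * (a + b) = p * m := by rw [Nat.mul_add, hij]
          exact Nat.eq_of_mul_eq_mul_left hp this
        · rw [if_neg hj, mul_zero]
      · rw [if_neg hi, zero_mul]
  · rw [if_neg hd]
    symm
    apply Finset.sum_eq_zero
    rintro ⟨i, j⟩ hij
    rw [Finset.HasAntidiagonal.mem_antidiagonal] at hij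
    rw [coeff_powSubst, coeff_powSubst]
    by_cases hi : p ∣ i
    · by_cases hj : p ∣ j
      · exact absurd (hij ▸ Nat.dvd_add hi hj) hd
      · rw [if_neg hj, mul_zero]
    · rw [if_neg hi, zero_mul]

lemma powSubst_deriv {p : ℕ} (hp : 0 < p) (F : PowerSeries ℚ) :
    d⁄dX ℚ (powSubst F p) = (C (p : ℚ)) * X ^ (p - 1) * powSubst (d⁄dX ℚ F) p := by
  ext n
  rw [coeff_derivative, coeff_powSubst, mul_assoc, coeff_C_mul, coeff_X_pow_mul']
  by_cases hd : p ∣ n + 1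
  · obtain ⟨t, ht'⟩ := hd
    obtain ⟨s, rfl⟩ : ∃ s, t = s + 1 := by
      rcases t with _ | s
      · omega
      · exact ⟨s, rfl⟩
    have hps : p * (s + 1) = p * s + p := by ring
    have ht : n + 1 = p * s + p := by rw [ht', hps]
    have hle : p - 1 ≤ n := by omega
    rw [if_pos ⟨s + 1, ht'⟩, if_pos hle, coeff_powSubst]
    have h2 : n - (p - 1) = p * s := by omega
    rw [h2, if_pos ⟨s, rfl⟩, Nat.mul_div_cancel_left _ hp, coeff_derivative]
    have h4 : (n + 1) / p = s + 1 := by rw [ht']; exact Nat.mul_div_cancel_left _ hp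
    rw [h4]
    have h5 : (n : ℚ) + 1 = (p : ℚ) * ((s : ℚ) + 1) := by
      have := congrArg (fun k : ℕ => (k : ℚ)) ht'
      push_cast at this
      linarith
    rw [h5]
    ring
  · rw [if_neg hd]
    by_cases hle : p - 1 ≤ n
    · rw [if_pos hle, coeff_powSubst]
      have hnd : ¬ p ∣ n - (p - 1) := by
        intro hdd
        obtain ⟨t, ht⟩ := hdd
        apply hd
        have hpt : p * (t + 1) = p * t + p := by ring
        exact ⟨t + 1, by omega⟩
      rw [if_neg hnd, mul_zero, zero_mul]
    · rw [if_neg hle, mul_zero, zero_mul]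

lemma one_sub_X_inv : ((1 : PowerSeries ℚ) - X)⁻¹ = PowerSeries.mk fun _ => 1 := by
  have hc : constantCoeff ((1 : PowerSeries ℚ) - X) ≠ 0 := by
    simp
  symm
  rw [PowerSeries.eq_inv_iff_mul_eq_one hc]
  ext n
  rw [mul_sub, mul_one, map_sub]
  cases n with
  | zero => simp
  | succ n => simp [coeff_succ_mul_X, coeff_mk]

lemma one_sub_X_pow_inv {p : ℕ} (hp : 0 < p) :
    ((1 : PowerSeries ℚ) - X ^ p)⁻¹ = PowerSeries.mk fun n => if p ∣ n then 1 else 0 := by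
  have hc : constantCoeff ((1 : PowerSeries ℚ) - X ^ p) ≠ 0 := by
    have : constantCoeff (X ^ p : PowerSeries ℚ) = 0 := by
      rw [map_pow, constantCoeff_X, zero_pow hp.ne']
    simp [this]
  symm
  rw [PowerSeries.eq_inv_iff_mul_eq_one hc]
  ext n
  rw [mul_sub, mul_one, map_sub, coeff_mul_X_pow', coeff_mk]
  by_cases hd : p ∣ n
  · rcases Nat.eq_zero_or_pos n with rfl | hn
    · have h0 : ¬ p ≤ 0 := by omega
      simp [h0]
    · have hpn : p ≤ n := Nat.le_of_dvd hn hd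
      rw [if_pos hd, if_pos hpn, coeff_mk]
      have : p ∣ n - p := (Nat.dvd_sub hd dvd_rfl)
      rw [if_pos this]
      have hn0 : n ≠ 0 := by omega
      simp [coeff_one, hn0]
  · rw [if_neg hd]
    have hn0 : n ≠ 0 := by rintro rfl; exact hd (dvd_zero p)
    rw [coeff_one, if_neg hn0]
    by_cases hpn : p ≤ n
    · rw [if_pos hpn, coeff_mk]
      have : ¬ p ∣ n - p := by
        intro h
        exact hd (by have := Nat.dvd_add h (dvd_refl p); rwa [Nat.sub_add_cancel hpn] at this)
      rw [if_neg this]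
      ring
    · rw [if_neg hpn]
      ring

lemma constantCoeff_expPS (f : PowerSeries ℚ) : constantCoeff (expPS f) = 1 := by
  rw [← coeff_zero_eq_constantCoeff_apply, expPS, coeff_mk]
  simp

lemma constantCoeff_serA (a : ℕ → ℚ) : constantCoeff (serA a) = 0 := by
  rw [← coeff_zero_eq_constantCoeff_apply, serA, coeff_mk]
  simp

lemma coeff_deriv_serA (a : ℕ → ℚ) (n : ℕ) : coeff n (d⁄dX ℚ (serA a)) = a (n + 1) := by
  rw [coeff_derivative, serA, coeff_mk, if_neg (Nat.succ_ne_zero n)]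
  have h : ((n : ℚ) + 1) ≠ 0 := by positivity
  push_cast
  field_simp

/-- The functional equation `G_r^p(x) = (Q_p(x) G_r^p(x^p))^(p^(r-2))` with
`Q_p(x) = (1-x)^p/(1-x^p)`. -/
theorem stmt_17 (p : ℕ) (hp : p.Prime) (r : ℕ) (hr : 2 ≤ r) :
    Gser p r = (((1 : PowerSeries ℚ) - PowerSeries.X) ^ p *
        ((1 : PowerSeries ℚ) - PowerSeries.X ^ p)⁻¹ *
        powSubst (Gser p r) p) ^ (p ^ (r - 2)) := by
  haveI := Fact.mk hp
  have hp0 : 0 < p := hp.pos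
  obtain ⟨R, rfl⟩ : ∃ R, r = R + 2 := ⟨r - 2, by omega⟩
  have er1 : R + 2 - 1 = R + 1 := by omega
  have er2 : R + 2 - 2 = R := by omega
  set a : ℕ → ℚ := fun n => -((p : ℚ) ^ ((1 + padicValNat p n) * (R + 2 - 1))) with ha
  set f : PowerSeries ℚ := serA a with hfdef
  have hGdef : Gser p (R + 2) = expPS f := rfl
  have hf0 : constantCoeff f = 0 := constantCoeff_serA a
  set u : PowerSeries ℚ := 1 - X with hu
  set v : PowerSeries ℚ := 1 - X ^ p with hv
  set G : PowerSeries ℚ := expPS f with hG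
  set Gp : PowerSeries ℚ := powSubst G p with hGp
  set q : PowerSeries ℚ := C (p : ℚ) * X ^ (p - 1) with hq
  have hcu : constantCoeff u = 1 := by simp [hu]
  have hcv : constantCoeff v = 1 := by
    simp [hv, map_pow, zero_pow hp0.ne']
  have hcG : constantCoeff G = 1 := constantCoeff_expPS f
  have hcGp : constantCoeff Gp = 1 := by
    rw [← coeff_zero_eq_constantCoeff_apply, hGp, coeff_powSubst, if_pos (dvd_zero p),
      Nat.zero_div, coeff_zero_eq_constantCoeff_apply, hcG]
  -- LD facts
  have hGld : LD G (d⁄dX ℚ f) := deriv_expPS hf0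
  have huld : LD u (-(u⁻¹)) := by
    unfold LD
    have hdu : d⁄dX ℚ u = -1 := by
      rw [hu, map_sub, derivative_X]
      simp
    rw [hdu, neg_mul, PowerSeries.inv_mul_cancel u (by rw [hcu]; norm_num)]
  have hvld : LD v (-(q * v⁻¹)) := by
    unfold LD
    have hdv : d⁄dX ℚ v = -q := by
      rw [hv, map_sub, Derivation.leibniz_pow, derivative_X]
      simp only [smul_eq_mul, mul_one]
      rw [← Nat.cast_smul_eq_nsmul ℚ p, smul_eq_C_mul, hq]
      have h1 : d⁄dX ℚ (1 : PowerSeries ℚ) = 0 := by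
        exact Derivation.map_one_eq_zero _
      rw [h1, zero_sub]
    rw [hdv]
    have : q * v⁻¹ * v = q := by
      rw [mul_assoc, PowerSeries.inv_mul_cancel v (by rw [hcv]; norm_num), mul_one]
    rw [neg_mul, this]
  have hvinv : LD v⁻¹ (q * v⁻¹) := by
    have := LD_inv hvld (by rw [hcv]; norm_num)
    rwa [neg_neg] at this
  have hGpld : LD Gp (q * powSubst (d⁄dX ℚ f) p) := by
    unfold LD
    have hdG : d⁄dX ℚ G = d⁄dX ℚ f * G := hGld
    rw [hGp, powSubst_deriv hp0, hdG, powSubst_mul hp0, hq]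
    ring
  set gB : PowerSeries ℚ := (p : PowerSeries ℚ) * -(u⁻¹) + q * v⁻¹ + q * powSubst (d⁄dX ℚ f) p
    with hgB
  have hBld : LD (u ^ p * v⁻¹ * Gp) gB :=
    LD_mul (LD_mul (LD_pow huld p) hvinv) hGpld
  have hHld : LD ((u ^ p * v⁻¹ * Gp) ^ (p ^ R)) (((p ^ R : ℕ) : PowerSeries ℚ) * gB) :=
    LD_pow hBld (p ^ R)
  -- arithmetic helpers
  have hT1 : ∀ n : ℕ, coeff n ((p : PowerSeries ℚ) * -(u⁻¹)) = -(p : ℚ) := by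
    intro n
    rw [show ((p : ℕ) : PowerSeries ℚ) = C (p : ℚ) from (map_natCast (C (R := ℚ)) p).symm,
      coeff_C_mul, hu, one_sub_X_inv, map_neg, coeff_mk]
    ring
  have hT2 : ∀ n : ℕ, coeff n (q * v⁻¹) = if p ∣ n + 1 then (p : ℚ) else 0 := by
    intro n
    rw [hq, hv, one_sub_X_pow_inv hp0, mul_assoc, coeff_C_mul, coeff_X_pow_mul']
    by_cases hd : p ∣ n + 1
    · obtain ⟨t, ht'⟩ := hd
      obtain ⟨s, rfl⟩ : ∃ s, t = s + 1 := by
        rcases t with _ | s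
        · omega
        · exact ⟨s, rfl⟩
      have hps : p * (s + 1) = p * s + p := by ring
      have ht : n + 1 = p * s + p := by rw [ht', hps]
      have hle : p - 1 ≤ n := by omega
      have h2 : n - (p - 1) = p * s := by omega
      rw [if_pos hle, coeff_mk, h2, if_pos ⟨s, rfl⟩, if_pos ⟨s + 1, ht'⟩, mul_one]
    · rw [if_neg hd]
      by_cases hle : p - 1 ≤ n
      · rw [if_pos hle, coeff_mk]
        have hnd : ¬ p ∣ n - (p - 1) := by
          intro hdd
          obtain ⟨t, ht⟩ := hdd
          apply hd
          have hpt : p * (t + 1) = p * t + p := by ring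
          exact ⟨t + 1, by omega⟩
        rw [if_neg hnd, mul_zero]
      · rw [if_neg hle, mul_zero]
  have hT3 : ∀ n : ℕ, coeff n (q * powSubst (d⁄dX ℚ f) p)
      = if p ∣ n + 1 then (p : ℚ) * a ((n + 1) / p) else 0 := by
    intro n
    rw [hq, mul_assoc, coeff_C_mul, coeff_X_pow_mul']
    by_cases hd : p ∣ n + 1
    · obtain ⟨t, ht'⟩ := hd
      obtain ⟨s, rfl⟩ : ∃ s, t = s + 1 := by
        rcases t with _ | s
        · omega
        · exact ⟨s, rfl⟩
      have hps : p * (s + 1) = p * s + p := by ring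
      have ht : n + 1 = p * s + p := by rw [ht', hps]
      have hle : p - 1 ≤ n := by omega
      have h2 : n - (p - 1) = p * s := by omega
      rw [if_pos hle, coeff_powSubst, h2, if_pos ⟨s, rfl⟩, Nat.mul_div_cancel_left _ hp0,
        if_pos ⟨s + 1, ht'⟩, hfdef, coeff_deriv_serA]
      have h4 : (n + 1) / p = s + 1 := by rw [ht']; exact Nat.mul_div_cancel_left _ hp0
      rw [h4]
    · rw [if_neg hd]
      by_cases hle : p - 1 ≤ n
      · rw [if_pos hle, coeff_powSubst]
        have hnd : ¬ p ∣ n - (p - 1) := by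
          intro hdd
          obtain ⟨t, ht⟩ := hdd
          apply hd
          have hpt : p * (t + 1) = p * t + p := by ring
          exact ⟨t + 1, by omega⟩
        rw [if_neg hnd, mul_zero]
      · rw [if_neg hle, mul_zero]
  -- the key coefficient identity
  have hE : d⁄dX ℚ f = ((p ^ R : ℕ) : PowerSeries ℚ) * gB := by
    ext n
    rw [show ((p ^ R : ℕ) : PowerSeries ℚ) = C ((p ^ R : ℕ) : ℚ)
        from (map_natCast (C (R := ℚ)) _).symm, coeff_C_mul, hgB, map_add, map_add,
      hT1 n, hT2 n, hT3 n, hfdef, coeff_deriv_serA]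
    push_cast
    by_cases hd : p ∣ n + 1
    · rw [if_pos hd, if_pos hd]
      have hpdvd : n + 1 = p * ((n + 1) / p) := (Nat.mul_div_cancel' hd).symm
      set t := (n + 1) / p with htdef
      have ht0 : t ≠ 0 := by
        intro h
        rw [h, mul_zero] at hpdvd
        omega
      have hval : padicValNat p (n + 1) = 1 + padicValNat p t := by
        rw [hpdvd, padicValNat.mul hp.ne_zero ht0, padicValNat.self hp.one_lt]
      rw [ha]
      simp only
      rw [hval, er1]
      set ν := padicValNat p t
      rw [show (1 + (1 + ν)) * (R + 1) = R + 1 + (1 + ν) * (R + 1) from by ring, pow_add]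
      ring
    · rw [if_neg hd, if_neg hd]
      rw [ha]
      simp only
      rw [padicValNat.eq_zero_of_not_dvd hd, er1]
      rw [show (1 + 0) * (R + 1) = R + 1 from by ring, pow_add]
      ring
  rw [← hE] at hHld
  have hcH : constantCoeff ((u ^ p * v⁻¹ * Gp) ^ (p ^ R)) = 1 := by
    rw [map_pow, map_mul, map_mul, map_pow, hcu, hcGp, constantCoeff_inv, hcv]
    norm_num
  have main : G = (u ^ p * v⁻¹ * Gp) ^ (p ^ R) :=
    LD_unique hGld hHld (by rw [hcG, hcH]) (by rw [hcH]; norm_num)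
  rw [er2]
  exact main
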